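/- Suppose the game Γ has exactly M Nash equilibria σ^{*(1)},…,σ^{*(M)} ∈ Δ^N (M ≥ 1) and let q(α) = max_{σ ∈ Σ_α} min_{1 ≤ m ≤ M} ‖σ − σ^{*(m)}‖ for α ≥ 0. Then q : ℝ_{≥0} → ℝ is upper semicontinuous. -/

import Mathlib

open scoped BigOperators

noncomputable section

/-- Mixed extension of a function on pure action profiles: players `Fin N`,
common action set `Fin K`, mixed profile `σ : Fin N → Fin K → ℝ`. -/
def mixedExt {N K : ℕ} (v : (Fin N → Fin K) → ℝ) (σ : Fin N → Fin K → ℝ) : ℝ :=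
  ∑ a : Fin N → Fin K, v a * ∏ i, σ i (a i)

/-- `σ` is an `ε`-Nash equilibrium of the game with utilities `u`
(in particular each `σ i` lies in the standard simplex). -/
def IsEpsNash {N K : ℕ} (u : Fin N → (Fin N → Fin K) → ℝ) (ε : ℝ)
    (σ : Fin N → Fin K → ℝ) : Prop :=
  (∀ i, σ i ∈ stdSimplex ℝ (Fin K)) ∧
    ∀ i : Fin N, ∀ τ ∈ stdSimplex ℝ (Fin K),
      mixedExt (u i) σ ≥ mixedExt (u i) (Function.update σ i τ) - ε

/-- Euclidean norm of the concatenation of `x` in `ℝ^{NK}`. -/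
def eNorm {N K : ℕ} (x : Fin N → Fin K → ℝ) : ℝ :=
  Real.sqrt (∑ i, ∑ k, (x i k) ^ 2)

/-- Distance of `σ` to the nearest of the equilibria `σstar m`. -/
def minDist {N K M : ℕ} (σstar : Fin M → Fin N → Fin K → ℝ)
    (σ : Fin N → Fin K → ℝ) : ℝ :=
  ⨅ m : Fin M, eNorm (fun i k => σ i k - σstar m i k)

/-- `q α` : the largest distance from an `α`-Nash equilibrium to the set of
Nash equilibria. -/
def qfun {N K M : ℕ} (u : Fin N → (Fin N → Fin K) → ℝ)
    (σstar : Fin M → Fin N → Fin K → ℝ) (α : ℝ) : ℝ :=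
  sSup (minDist σstar '' {σ | IsEpsNash u α σ})

-- continuity of mixedExt
lemma cont_mixedExt {N K : ℕ} (v : (Fin N → Fin K) → ℝ) :
    Continuous fun σ : Fin N → Fin K → ℝ => mixedExt v σ := by
  unfold mixedExt
  exact continuous_finset_sum _ fun a _ =>
    continuous_const.mul (continuous_finset_prod _ fun i _ =>
      (continuous_apply (a i)).comp (continuous_apply i))

lemma cont_mixedExt_upd {N K : ℕ} (v : (Fin N → Fin K) → ℝ) (i : Fin N)
    (τ : Fin K → ℝ) :
    Continuous fun σ : Fin N → Fin K → ℝ => mixedExt v (Function.update σ i τ) := by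
  exact (cont_mixedExt v).comp (continuous_id.update i continuous_const)

lemma cont_eNorm_diff {N K : ℕ} (c : Fin N → Fin K → ℝ) :
    Continuous fun σ : Fin N → Fin K → ℝ => eNorm (fun i k => σ i k - c i k) := by
  unfold eNorm
  apply Real.continuous_sqrt.comp
  exact continuous_finset_sum _ fun i _ => continuous_finset_sum _ fun k _ =>
    by fun_prop

lemma isClosed_eps {N K : ℕ} (u : Fin N → (Fin N → Fin K) → ℝ) (α : ℝ) :
    IsClosed {σ : Fin N → Fin K → ℝ | IsEpsNash u α σ} := by
  have : {σ : Fin N → Fin K → ℝ | IsEpsNash u α σ} =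
      (⋂ i, {σ : Fin N → Fin K → ℝ | σ i ∈ stdSimplex ℝ (Fin K)}) ∩
      ⋂ i, ⋂ τ ∈ stdSimplex ℝ (Fin K),
        {σ : Fin N → Fin K → ℝ |
          mixedExt (u i) (Function.update σ i τ) - α ≤ mixedExt (u i) σ} := by
    ext σ
    simp only [IsEpsNash, Set.mem_setOf_eq, Set.mem_inter_iff, Set.mem_iInter, ge_iff_le]
  rw [this]
  refine IsClosed.inter (isClosed_iInter fun i => ?_)
    (isClosed_iInter fun i => isClosed_iInter fun τ => isClosed_iInter fun _ => ?_)
  · exact (isClosed_stdSimplex ℝ (Fin K)).preimage (continuous_apply i)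
  · exact isClosed_le ((cont_mixedExt_upd (u i) i τ).sub continuous_const) (cont_mixedExt (u i))

lemma eps_mono {N K : ℕ} {u : Fin N → (Fin N → Fin K) → ℝ} {α β : ℝ} (h : α ≤ β)
    {σ : Fin N → Fin K → ℝ} (hσ : IsEpsNash u α σ) : IsEpsNash u β σ := by
  refine ⟨hσ.1, fun i τ hτ => ?_⟩
  have := hσ.2 i τ hτ
  linarith

lemma entry_bound {K : ℕ} {x : Fin K → ℝ} (hx : x ∈ stdSimplex ℝ (Fin K)) (k : Fin K) :
    x k ∈ Set.Icc (0:ℝ) 1 := by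
  refine ⟨hx.1 k, ?_⟩
  calc x k ≤ ∑ j, x j := Finset.single_le_sum (fun j _ => hx.1 j) (Finset.mem_univ k)
    _ = 1 := hx.2

lemma minDist_bound {N K M : ℕ} (hM : 1 ≤ M) {σstar : Fin M → Fin N → Fin K → ℝ}
    (hstar : ∀ m i, σstar m i ∈ stdSimplex ℝ (Fin K))
    {σ : Fin N → Fin K → ℝ} (hσ : ∀ i, σ i ∈ stdSimplex ℝ (Fin K)) :
    minDist σstar σ ≤ Real.sqrt (N * K) := by
  have : Nonempty (Fin M) := ⟨⟨0, hM⟩⟩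
  have hbdd : BddBelow (Set.range fun m : Fin M =>
      eNorm (fun i k => σ i k - σstar m i k)) := (Set.finite_range _).bddBelow
  refine le_trans (ciInf_le hbdd ⟨0, hM⟩) ?_
  unfold eNorm
  apply Real.sqrt_le_sqrt
  calc (∑ i, ∑ k, (σ i k - σstar ⟨0, hM⟩ i k) ^ 2)
      ≤ ∑ i : Fin N, ∑ k : Fin K, (1:ℝ) := by
        refine Finset.sum_le_sum fun i _ => Finset.sum_le_sum fun k _ => ?_
        have h1 := entry_bound (hσ i) k
        have h2 := entry_bound (hstar ⟨0, hM⟩ i) k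
        have : |σ i k - σstar ⟨0, hM⟩ i k| ≤ 1 := by
          rw [abs_le]; constructor <;> [linarith [h1.1, h2.2]; linarith [h1.2, h2.1]]
        calc (σ i k - σstar ⟨0, hM⟩ i k) ^ 2 = |σ i k - σstar ⟨0, hM⟩ i k| ^ 2 := (sq_abs _).symm
          _ ≤ 1 ^ 2 := by nlinarith [abs_nonneg (σ i k - σstar ⟨0, hM⟩ i k)]
          _ = 1 := one_pow 2
    _ = (N * K : ℝ) := by simp [mul_comm]

lemma image_nonempty {N K M : ℕ} {u : Fin N → (Fin N → Fin K) → ℝ}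
    {σstar : Fin M → Fin N → Fin K → ℝ} (hM : 1 ≤ M)
    (hNE : ∀ m, IsEpsNash u 0 (σstar m)) {α : ℝ} (hα : 0 ≤ α) :
    (minDist σstar '' {σ | IsEpsNash u α σ}).Nonempty :=
  ⟨_, Set.mem_image_of_mem _ (eps_mono hα (hNE ⟨0, hM⟩))⟩

lemma image_bddAbove {N K M : ℕ} {u : Fin N → (Fin N → Fin K) → ℝ}
    {σstar : Fin M → Fin N → Fin K → ℝ} (hM : 1 ≤ M)
    (hNE : ∀ m, IsEpsNash u 0 (σstar m)) (α : ℝ) :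
    BddAbove (minDist σstar '' {σ | IsEpsNash u α σ}) := by
  refine ⟨Real.sqrt (N * K), ?_⟩
  rintro x ⟨σ, hσ, rfl⟩
  exact minDist_bound hM (fun m => (hNE m).1) hσ.1


/-- `q` is upper semicontinuous on `[0, ∞)`. -/
theorem qfun_upperSemicontinuous {N K M : ℕ}
    (u : Fin N → (Fin N → Fin K) → ℝ)
    (σstar : Fin M → Fin N → Fin K → ℝ)
    (hM : 1 ≤ M)
    (hinj : Function.Injective σstar)
    (hNE : ∀ m, IsEpsNash u 0 (σstar m))
    (hall : ∀ σ, IsEpsNash u 0 σ → ∃ m, σ = σstar m) :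
    UpperSemicontinuousOn (qfun u σstar) (Set.Ici (0 : ℝ)) := by
  have : Nonempty (Fin M) := ⟨⟨0, hM⟩⟩
  intro x hx y hy
  simp only [Set.mem_Ici] at hx
  -- Step 1: find β > x with qfun β < y
  obtain ⟨β, hβx, hβy⟩ : ∃ β > x, qfun u σstar β < y := by
    by_contra hcon
    push_neg at hcon
    set y' : ℝ := (qfun u σstar x + y) / 2 with hy'def
    have hy'1 : qfun u σstar x < y' := by simp [hy'def]; linarith
    have hy'2 : y' < y := by simp [hy'def]; linarith
    -- nested compact sets
    set T : ℕ → Set (Fin N → Fin K → ℝ) := fun n =>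
      {σ | IsEpsNash u (x + 1/(n+1)) σ ∧ y' ≤ minDist σstar σ} with hT
    have hTclosed : ∀ n, IsClosed (T n) := by
      intro n
      have : T n = {σ | IsEpsNash u (x + 1/(n+1)) σ} ∩
          ⋂ m : Fin M, {σ | y' ≤ eNorm (fun i k => σ i k - σstar m i k)} := by
        ext σ
        simp only [hT, Set.mem_setOf_eq, Set.mem_inter_iff, Set.mem_iInter,
          minDist, and_congr_right_iff]
        intro _
        exact le_ciInf_iff (Set.finite_range _).bddBelow
      rw [this]
      exact (isClosed_eps u _).inter (isClosed_iInter fun m =>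
        isClosed_le continuous_const (cont_eNorm_diff (σstar m)))
    have hTsub : ∀ n, T n ⊆ Set.univ.pi fun _ : Fin N => stdSimplex ℝ (Fin K) := by
      intro n σ hσ
      rw [Set.mem_univ_pi]
      exact fun i => hσ.1.1 i
    have hCcompact : IsCompact (Set.univ.pi fun _ : Fin N => stdSimplex ℝ (Fin K)) :=
      isCompact_univ_pi fun _ => isCompact_stdSimplex ℝ (Fin K)
    have hTne : ∀ n, (T n).Nonempty := by
      intro n
      have hpos : (0:ℝ) < 1/(n+1) := by positivity
      have hb : x < x + 1/(n+1) := by linarith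
      have hys : y' < sSup (minDist σstar '' {σ | IsEpsNash u (x + 1/(n+1)) σ}) :=
        lt_of_lt_of_le hy'2 (hcon _ hb)
      obtain ⟨z, hz, hzy⟩ := exists_lt_of_lt_csSup
        (image_nonempty hM hNE (by linarith)) hys
      obtain ⟨σ, hσ, rfl⟩ := hz
      exact ⟨σ, hσ, hzy.le⟩
    have hTmono : ∀ n, T (n+1) ⊆ T n := by
      intro n σ hσ
      refine ⟨eps_mono ?_ hσ.1, hσ.2⟩
      have h1 : (1:ℝ)/((n:ℝ)+1+1) ≤ 1/((n:ℝ)+1) := by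
        apply one_div_le_one_div_of_le <;> [positivity; linarith]
      push_cast
      linarith
    obtain ⟨σ, hσ⟩ := IsCompact.nonempty_iInter_of_sequence_nonempty_isCompact_isClosed
      T hTmono hTne (hCcompact.of_isClosed_subset (hTclosed 0) (hTsub 0)) hTclosed
    simp only [Set.mem_iInter] at hσ
    -- σ is an x-Nash equilibrium
    have hσx : IsEpsNash u x σ := by
      refine ⟨(hσ 0).1.1, fun i τ hτ => ?_⟩
      rw [ge_iff_le, sub_le_iff_le_add]
      refine le_of_forall_pos_le_add fun ε hε => ?_
      obtain ⟨n, hn⟩ := exists_nat_one_div_lt hε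
      have := (hσ n).1.2 i τ hτ
      have h2 : (1:ℝ)/(n+1) < ε := by push_cast at hn ⊢; linarith
      linarith
    have : y' ≤ qfun u σstar x :=
      le_csSup (image_bddAbove hM hNE x) (Set.mem_image_of_mem _ hσx) |>.trans' (hσ 0).2
    linarith
  -- Step 2: use monotonicity on (-∞, β)
  have hIio : Set.Iio β ∈ nhds x := Iio_mem_nhds hβx
  filter_upwards [nhdsWithin_le_nhds hIio, self_mem_nhdsWithin] with α hα hα0
  simp only [Set.mem_Iio] at hα
  simp only [Set.mem_Ici] at hα0
  have hmono : qfun u σstar α ≤ qfun u σstar β := by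
    apply csSup_le_csSup (image_bddAbove hM hNE β) (image_nonempty hM hNE hα0)
    exact Set.image_mono fun σ hσ => eps_mono hα.le hσ
  linarith
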